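/- arXiv:1606.05391 — 3 statements merged into one kernel-verified Lean document; each statement's English description precedes it below -/
import Mathlib

section
/- If each link i (for i = 1, ..., N) must be scheduled at least once in every frame of δ_i consecutive slots, and at most one link can be scheduled per slot, then the service frequency constraints can only be satisfied if ∑_{i=1}^N 1/δ_i ≤ 1. Formally: if for each i there is a function s_i : ℕ → {0,1} with ∑_i s_i[t] ≤ 1 for all t, and for every i and every k, ∑_{t=kδ_i}^{(k+1)δ_i - 1} s_i[t] ≥ 1, then ∑_{i=1}^N 1/δ_i ≤ 1. -/
/-- If each link `i` must be scheduled at least once in every frame of `δ i` consecutive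
slots, and at most one link can be scheduled per slot, then `∑ 1/δ i ≤ 1`. -/
theorem stmt_0 (N : ℕ) (δ : Fin N → ℕ) (hδ : ∀ i, 0 < δ i)
    (s : Fin N → ℕ → ℕ) (hs01 : ∀ i t, s i t ≤ 1)
    (hslot : ∀ t, ∑ i, s i t ≤ 1)
    (hfreq : ∀ (i : Fin N) (k : ℕ),
      1 ≤ ∑ t ∈ Finset.Ico (k * δ i) ((k + 1) * δ i), s i t) :
    ∑ i, (1 : ℝ) / (δ i : ℝ) ≤ 1 := by
  set T : ℕ := ∏ i, δ i with hT
  have hTpos : 0 < T := Finset.prod_pos (fun i _ => hδ i)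
  -- lemma: for each i and m, m ≤ ∑ t ∈ range (m * δ i), s i t
  have key : ∀ (i : Fin N) (m : ℕ), m ≤ ∑ t ∈ Finset.range (m * δ i), s i t := by
    intro i m
    induction m with
    | zero => simp
    | succ m ih =>
      have hsplit : ∑ t ∈ Finset.Ico 0 (m * δ i), s i t
          + ∑ t ∈ Finset.Ico (m * δ i) ((m + 1) * δ i), s i t
          = ∑ t ∈ Finset.Ico 0 ((m + 1) * δ i), s i t :=
        Finset.sum_Ico_consecutive _ (Nat.zero_le _)
          (Nat.mul_le_mul_right _ (Nat.le_succ m))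
      rw [Finset.range_eq_Ico, ← hsplit, ← Finset.range_eq_Ico]
      have := hfreq i m
      omega
  set m : Fin N → ℕ := fun i => T / δ i with hm
  have hmul : ∀ i, m i * δ i = T := by
    intro i
    exact Nat.div_mul_cancel (Finset.dvd_prod_of_mem δ (Finset.mem_univ i))
  -- ∑ i, m i ≤ T
  have hsum : ∑ i, m i ≤ T := by
    calc ∑ i, m i ≤ ∑ i, ∑ t ∈ Finset.range T, s i t := by
          apply Finset.sum_le_sum
          intro i _
          have := key i (m i)
          rwa [hmul i] at this
      _ = ∑ t ∈ Finset.range T, ∑ i, s i t := Finset.sum_comm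
      _ ≤ ∑ t ∈ Finset.range T, 1 := Finset.sum_le_sum (fun t _ => hslot t)
      _ = T := by simp
  -- convert to reals
  have hδR : ∀ i, (0:ℝ) < (δ i : ℝ) := fun i => by exact_mod_cast hδ i
  have hTR : (0:ℝ) < (T : ℝ) := by exact_mod_cast hTpos
  have heq : ∀ i, (1 : ℝ) / (δ i : ℝ) = (m i : ℝ) / (T : ℝ) := by
    intro i
    rw [div_eq_div_iff (ne_of_gt (hδR i)) (ne_of_gt hTR), one_mul]
    exact_mod_cast (hmul i).symm
  calc ∑ i, (1 : ℝ) / (δ i : ℝ) = ∑ i, (m i : ℝ) / (T : ℝ) := by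
        exact Finset.sum_congr rfl (fun i _ => heq i)
    _ = (∑ i, (m i : ℝ)) / (T : ℝ) := by rw [Finset.sum_div]
    _ ≤ (T : ℝ) / (T : ℝ) := by
        gcongr
        exact_mod_cast hsum
    _ = 1 := div_self (ne_of_gt hTR)
end

section
/- Let n be a positive integer and β > 0. The n-dimensional Lebesgue measure of the set S = {k ∈ ℝ^n : k_i ≥ 0 for all i} ∩ {k : ∑_{i=1}^n max(k_i - a_i, 0) < β}, where a_1, ..., a_n > 0, satisfies vol(S) = ∑_{T ⊆ {1,...,n}} (β^{|T|}/|T|!) · ∏_{j ∉ T} a_j. -/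
open MeasureTheory Finset

namespace Stmt4Aux

def S (n : ℕ) (β : ℝ) (a : Fin n → ℝ) : Set (Fin n → ℝ) :=
  {k | (∀ i, 0 ≤ k i) ∧ ∑ i, max (k i - a i) 0 < β}

lemma measurableSet_S (n : ℕ) (β : ℝ) (a : Fin n → ℝ) : MeasurableSet (S n β a) := by
  have h1 : MeasurableSet {k : Fin n → ℝ | ∀ i, 0 ≤ k i} := by
    rw [Set.setOf_forall]
    exact MeasurableSet.iInter fun i =>
      measurableSet_le measurable_const (measurable_pi_apply i)
  have h2 : MeasurableSet {k : Fin n → ℝ | ∑ i, max (k i - a i) 0 < β} := by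
    apply measurableSet_lt _ measurable_const
    exact Finset.measurable_sum _ fun i _ =>
      ((measurable_pi_apply i).sub measurable_const).max measurable_const
  exact (Set.setOf_and ..▸ h1.inter h2 : _)

lemma key_int (p q : ℝ) (h : p ≤ q) (m : ℕ) (c : ℝ) (hc : 0 ≤ c) :
    ∫⁻ x in Set.Ico p q, ENNReal.ofReal ((q - x) ^ m / m.factorial * c) =
      ENNReal.ofReal ((q - p) ^ (m + 1) / (m + 1).factorial * c) := by
  have hpos : (0:ℝ) < m.factorial := by exact_mod_cast m.factorial_pos
  rw [← ofReal_integral_eq_lintegral_ofReal]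
  · congr 1
    have : ∀ x : ℝ, (q - x) ^ m / m.factorial * c = (q - x) ^ m * (c / m.factorial) := by
      intro x; ring
    simp_rw [this]
    rw [restrict_Ico_eq_restrict_Ioc, ← intervalIntegral.integral_of_le h,
      intervalIntegral.integral_mul_const,
      intervalIntegral.integral_comp_sub_left (fun x => x ^ m) q]
    rw [sub_self, integral_pow]
    rw [Nat.factorial_succ]
    push_cast
    field_simp
    rw [zero_pow (Nat.succ_ne_zero m), sub_zero]
  · apply (((continuous_const.sub continuous_id).pow m).div_const _ |>.mul continuous_const).integrableOn_Icc.mono_set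
    exact Set.Ico_subset_Icc_self
  · filter_upwards [ae_restrict_mem measurableSet_Ico] with x hx
    have : (0:ℝ) ≤ q - x := by linarith [hx.2]
    exact mul_nonneg (div_nonneg (pow_nonneg this m) hpos.le) hc

end Stmt4Aux

namespace Stmt4Aux2

lemma not_mem_map (n : ℕ) (T : Finset (Fin n)) :
    (0 : Fin (n + 1)) ∉ T.map (Fin.succEmb n) := by
  simp [Fin.succ_ne_zero]

lemma preimage_map (n : ℕ) (T : Finset (Fin n)) :
    (T.map (Fin.succEmb n)).preimage Fin.succ (Fin.succ_injective n).injOn = T := by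
  ext i
  simp [Finset.mem_preimage, Fin.succEmb]

lemma map_preimage (n : ℕ) (T' : Finset (Fin (n + 1))) (h : (0 : Fin (n+1)) ∉ T') :
    (T'.preimage Fin.succ (Fin.succ_injective n).injOn).map (Fin.succEmb n) = T' := by
  ext j
  induction j using Fin.cases with
  | zero => simp [not_mem_map, h, Fin.succ_ne_zero]
  | succ i => simp [Finset.mem_preimage, Fin.succEmb]

lemma insert_map_preimage (n : ℕ) (T' : Finset (Fin (n + 1))) (h : (0 : Fin (n+1)) ∈ T') :
    insert 0 ((T'.preimage Fin.succ (Fin.succ_injective n).injOn).map (Fin.succEmb n)) = T' := by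
  ext j
  induction j using Fin.cases with
  | zero => simp [h]
  | succ i => simp [Finset.mem_preimage, Fin.succEmb, Fin.succ_ne_zero]

lemma compl_map (n : ℕ) (T : Finset (Fin n)) :
    (T.map (Fin.succEmb n))ᶜ = insert 0 (Tᶜ.map (Fin.succEmb n)) := by
  ext j
  induction j using Fin.cases with
  | zero => simp [not_mem_map, Fin.succ_ne_zero]
  | succ i => simp [Fin.succEmb, Fin.succ_ne_zero]

lemma compl_insert (n : ℕ) (T : Finset (Fin n)) :
    (insert (0 : Fin (n+1)) (T.map (Fin.succEmb n)))ᶜ = Tᶜ.map (Fin.succEmb n) := by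
  ext j
  induction j using Fin.cases with
  | zero => simp [not_mem_map, Fin.succ_ne_zero]
  | succ i => simp [Fin.succEmb, Fin.succ_ne_zero]

lemma sum_split {M : Type*} [AddCommMonoid M] (n : ℕ) (f : Finset (Fin (n + 1)) → M) :
    ∑ T : Finset (Fin (n + 1)), f T =
      (∑ T : Finset (Fin n), f (T.map (Fin.succEmb n))) +
      ∑ T : Finset (Fin n), f (insert 0 (T.map (Fin.succEmb n))) := by
  classical
  rw [← Finset.sum_filter_add_sum_filter_not Finset.univ
    (fun T : Finset (Fin (n+1)) => (0 : Fin (n+1)) ∉ T) f]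
  congr 1
  · refine (Finset.sum_nbij'
      (i := fun T : Finset (Fin n) => T.map (Fin.succEmb n))
      (j := fun T' : Finset (Fin (n+1)) => T'.preimage Fin.succ (Fin.succ_injective n).injOn)
      ?_ ?_ ?_ ?_ ?_).symm
    · intro T _; simp [not_mem_map, Fin.succ_ne_zero]
    · intro T' _; simp
    · intro T _; exact preimage_map n T
    · intro T' hT'
      simp only [Finset.mem_filter] at hT'
      exact map_preimage n T' hT'.2
    · intro T _; rfl
  · refine (Finset.sum_nbij'
      (i := fun T : Finset (Fin n) => insert 0 (T.map (Fin.succEmb n)))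
      (j := fun T' : Finset (Fin (n+1)) => T'.preimage Fin.succ (Fin.succ_injective n).injOn)
      ?_ ?_ ?_ ?_ ?_).symm
    · intro T _; simp
    · intro T' _; simp
    · intro T _
      ext i
      simp [Finset.mem_preimage, Fin.succ_ne_zero, Fin.succEmb]
    · intro T' hT'
      simp only [Finset.mem_filter, not_not] at hT'
      exact insert_map_preimage n T' hT'.2
    · intro T _; rfl

end Stmt4Aux2

namespace Stmt4Main

def S (n : ℕ) (β : ℝ) (a : Fin n → ℝ) : Set (Fin n → ℝ) :=
  {k | (∀ i, 0 ≤ k i) ∧ ∑ i, max (k i - a i) 0 < β}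

lemma volume_S : ∀ (n : ℕ) (β : ℝ), 0 < β → ∀ (a : Fin n → ℝ), (∀ i, 0 < a i) →
    volume (S n β a) =
      ∑ T : Finset (Fin n),
        ENNReal.ofReal (β ^ T.card / (Nat.factorial T.card) * ∏ j ∈ Tᶜ, a j) := by
  intro n
  induction n with
  | zero =>
    intro β hβ a ha
    have hS : S 0 β a = Set.univ := by
      ext k
      simp [S, hβ]
    rw [hS]
    have h1 : (volume : Measure (Fin 0 → ℝ)) Set.univ = 1 := by
      simp [volume_pi, Measure.pi_univ]
    rw [h1, Finset.univ_unique, Finset.sum_singleton]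
    have h2 : (default : Finset (Fin 0)) = ∅ := Finset.eq_empty_of_isEmpty _
    rw [h2]
    norm_num
  | succ n ih =>
    intro β hβ a ha
    have measurableSet_S : ∀ (m : ℕ) (γ : ℝ) (b : Fin m → ℝ), MeasurableSet (S m γ b) := by
      intro m γ b
      have h1 : MeasurableSet {k : Fin m → ℝ | ∀ i, 0 ≤ k i} := by
        rw [Set.setOf_forall]
        exact MeasurableSet.iInter fun i =>
          measurableSet_le measurable_const (measurable_pi_apply i)
      have h2 : MeasurableSet {k : Fin m → ℝ | ∑ i, max (k i - b i) 0 < γ} := by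
        apply measurableSet_lt _ measurable_const
        exact Finset.measurable_sum _ fun i _ =>
          ((measurable_pi_apply i).sub measurable_const).max measurable_const
      exact h1.inter h2
    set a' : Fin n → ℝ := fun i => a i.succ with ha'def
    have ha' : ∀ i, 0 < a' i := fun i => ha _
    set e := MeasurableEquiv.piFinSuccAbove (fun _ : Fin (n+1) => ℝ) 0 with he
    have hSm : MeasurableSet (S (n+1) β a) := measurableSet_S _ _ _
    have hme : ∀ p : ℝ × (Fin n → ℝ), e.symm p = Fin.cons p.1 p.2 := by
      intro p
      rw [he, MeasurableEquiv.piFinSuccAbove_symm_apply, Fin.insertNthEquiv_zero]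
      rfl
    set B : Set (ℝ × (Fin n → ℝ)) := e.symm ⁻¹' (S (n+1) β a) with hB
    have hBm : MeasurableSet B := e.symm.measurable hSm
    have h1 : volume (S (n+1) β a)
        = (volume.prod (Measure.pi fun _ : Fin n => volume)) B := by
      have hmp := measurePreserving_piFinSuccAbove
        (fun _ : Fin (n+1) => (volume : Measure ℝ)) 0
      have hSB : S (n+1) β a = e ⁻¹' B := by
        rw [hB, ← Set.preimage_comp, MeasurableEquiv.symm_comp_self, Set.preimage_id]
      rw [hSB, volume_pi, hmp.measure_preimage hBm.nullMeasurableSet]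
    rw [h1, Measure.prod_apply hBm]
    have hslice : ∀ x : ℝ, Prod.mk x ⁻¹' B
        = {y : Fin n → ℝ | (0 ≤ x ∧ ∀ i, 0 ≤ y i)
            ∧ max (x - a 0) 0 + ∑ i, max (y i - a' i) 0 < β} := by
      intro x
      ext y
      simp only [hB, Set.mem_preimage, hme, S, Set.mem_setOf_eq, Fin.forall_fin_succ,
        Fin.cons_zero, Fin.cons_succ, Fin.sum_univ_succ, ha'def]
    have hind : (fun x : ℝ => (Measure.pi fun _ : Fin n => volume) (Prod.mk x ⁻¹' B))
        = (Set.Ico 0 (a 0 + β)).indicator (fun x =>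
            ∑ T : Finset (Fin n), ENNReal.ofReal ((β - max (x - a 0) 0) ^ T.card
              / (Nat.factorial T.card) * ∏ j ∈ Tᶜ, a' j)) := by
      funext x
      rw [hslice]
      by_cases hx : x ∈ Set.Ico 0 (a 0 + β)
      · rw [Set.indicator_of_mem hx]
        obtain ⟨hx0, hx1⟩ := hx
        have hb' : 0 < β - max (x - a 0) 0 := by
          have : max (x - a 0) 0 < β := max_lt (by linarith) hβ
          linarith
        have hset : {y : Fin n → ℝ | (0 ≤ x ∧ ∀ i, 0 ≤ y i)
            ∧ max (x - a 0) 0 + ∑ i, max (y i - a' i) 0 < β}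
            = S n (β - max (x - a 0) 0) a' := by
          ext y
          simp only [S, Set.mem_setOf_eq]
          constructor
          · rintro ⟨⟨-, h1⟩, h2⟩
            exact ⟨h1, by linarith⟩
          · rintro ⟨h1, h2⟩
            exact ⟨⟨hx0, h1⟩, by linarith⟩
        rw [hset, ← volume_pi, ih _ hb' a' ha']
      · rw [Set.indicator_of_notMem hx]
        have hempty : {y : Fin n → ℝ | (0 ≤ x ∧ ∀ i, 0 ≤ y i)
            ∧ max (x - a 0) 0 + ∑ i, max (y i - a' i) 0 < β} = ∅ := by
          rw [Set.eq_empty_iff_forall_notMem]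
          rintro y ⟨⟨hx0, -⟩, hlt⟩
          have hximp : 0 ≤ x → a 0 + β ≤ x := by simpa [Set.mem_Ico] using hx
          have h : a 0 + β ≤ x := hximp hx0
          have h2 : β ≤ max (x - a 0) 0 := le_max_of_le_left (by linarith)
          have h3 : 0 ≤ ∑ i, max (y i - a' i) 0 :=
            Finset.sum_nonneg fun i _ => le_max_right _ _
          linarith
        rw [hempty]
        simp
    rw [hind, lintegral_indicator measurableSet_Ico]
    rw [← Set.Ico_union_Ico_eq_Ico (le_of_lt (ha 0)) (by linarith : a 0 ≤ a 0 + β),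
      lintegral_union measurableSet_Ico (Set.Ico_disjoint_Ico_same)]

    have hprodnn : ∀ T : Finset (Fin n), 0 ≤ ∏ j ∈ Tᶜ, a' j :=
      fun T => Finset.prod_nonneg fun j _ => (ha' j).le
    have hA : ∫⁻ x in Set.Ico 0 (a 0),
        ∑ T : Finset (Fin n), ENNReal.ofReal ((β - max (x - a 0) 0) ^ T.card
          / (Nat.factorial T.card) * ∏ j ∈ Tᶜ, a' j)
        = ∑ T : Finset (Fin n), ENNReal.ofReal (a 0 * (β ^ T.card
            / (Nat.factorial T.card) * ∏ j ∈ Tᶜ, a' j)) := by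
      rw [setLIntegral_congr_fun measurableSet_Ico (fun x hx => ?_)
        (g := fun _ => ∑ T : Finset (Fin n), ENNReal.ofReal (β ^ T.card
          / (Nat.factorial T.card) * ∏ j ∈ Tᶜ, a' j)),
        setLIntegral_const, Real.volume_Ico, sub_zero, Finset.sum_mul]
      · refine Finset.sum_congr rfl fun T _ => ?_
        rw [← ENNReal.ofReal_mul' (ha 0).le]
        congr 1
        ring
      · obtain ⟨hx1, hx2⟩ := hx
        rw [max_eq_right (by linarith : x - a 0 ≤ 0), sub_zero]
    have hB2 : ∫⁻ x in Set.Ico (a 0) (a 0 + β),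
        ∑ T : Finset (Fin n), ENNReal.ofReal ((β - max (x - a 0) 0) ^ T.card
          / (Nat.factorial T.card) * ∏ j ∈ Tᶜ, a' j)
        = ∑ T : Finset (Fin n), ENNReal.ofReal (β ^ (T.card + 1)
            / (Nat.factorial (T.card + 1)) * ∏ j ∈ Tᶜ, a' j) := by
      rw [setLIntegral_congr_fun measurableSet_Ico (fun x hx => ?_)
        (g := fun x => ∑ T : Finset (Fin n), ENNReal.ofReal ((a 0 + β - x) ^ T.card
          / (Nat.factorial T.card) * ∏ j ∈ Tᶜ, a' j))]
      · have hmeas : ∀ T : Finset (Fin n), Measurable (fun x : ℝ =>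
            ENNReal.ofReal ((a 0 + β - x) ^ T.card / (Nat.factorial T.card)
              * ∏ j ∈ Tᶜ, a' j)) := by
          intro T
          apply Measurable.ennreal_ofReal
          fun_prop
        rw [lintegral_finset_sum _ (fun T _ => hmeas T)]
        refine Finset.sum_congr rfl fun T _ => ?_
        have h := Stmt4Aux.key_int (a 0) (a 0 + β) (by linarith) T.card _ (hprodnn T)
        rw [h, add_sub_cancel_left]
      · obtain ⟨hx1, hx2⟩ := hx
        rw [max_eq_left (by linarith : (0:ℝ) ≤ x - a 0),
          show β - (x - a 0) = a 0 + β - x by ring]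
    rw [hA, hB2, Stmt4Aux2.sum_split n (fun T' : Finset (Fin (n+1)) =>
      ENNReal.ofReal (β ^ T'.card / (Nat.factorial T'.card) * ∏ j ∈ T'ᶜ, a j))]
    congr 1
    · refine Finset.sum_congr rfl fun T _ => ?_
      rw [Stmt4Aux2.compl_map, Finset.card_map,
        Finset.prod_insert (Stmt4Aux2.not_mem_map n Tᶜ), Finset.prod_map]
      apply congrArg ENNReal.ofReal
      have hp : ∏ j ∈ Tᶜ, a ((Fin.succEmb n) j) = ∏ j ∈ Tᶜ, a' j :=
        Finset.prod_congr rfl fun j _ => rfl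
      rw [hp]
      ring
    · refine Finset.sum_congr rfl fun T _ => ?_
      rw [Finset.card_insert_of_notMem (Stmt4Aux2.not_mem_map n T), Finset.card_map,
        Stmt4Aux2.compl_insert, Finset.prod_map]
      apply congrArg ENNReal.ofReal
      have hp : ∏ j ∈ Tᶜ, a ((Fin.succEmb n) j) = ∏ j ∈ Tᶜ, a' j :=
        Finset.prod_congr rfl fun j _ => rfl
      rw [hp]


end Stmt4Main

open MeasureTheory in
/-- Volume of `{k ≥ 0 : ∑ max (k i - a i) 0 < β}` equals
`∑_{T ⊆ [n]} (β^|T|/|T|!) ∏_{j ∉ T} a j`. -/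
theorem stmt_4 (n : ℕ) (hn : 0 < n) (β : ℝ) (hβ : 0 < β)
    (a : Fin n → ℝ) (ha : ∀ i, 0 < a i) :
    volume {k : Fin n → ℝ | (∀ i, 0 ≤ k i) ∧ ∑ i, max (k i - a i) 0 < β} =
      ∑ T : Finset (Fin n),
        ENNReal.ofReal (β ^ T.card / (Nat.factorial T.card) * ∏ j ∈ Tᶜ, a j) := by
  exact Stmt4Main.volume_S n β hβ a ha
end

section
/- Let δ_1, ..., δ_N be positive integers with ∑_{i=1}^N 1/δ_i ≤ 1. Consider the schedule produced by always, in each slot t, serving among links not yet served in their current frame (link i's frames are [k·δ_i, (k+1)·δ_i) for k ∈ ℕ) one whose remaining time-to-frame-end, δ_i - (t mod δ_i), is minimal (serving an arbitrary link if all have been served in their current frames). Then under this earliest-deadline-style policy every link i is served at least once in each of its frames. -/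
/-- Link `i` has not yet been served (by schedule `s`) in its current frame at slot `t`:
no slot `t'` with `t' < t` in the same frame `[k·δ i, (k+1)·δ i)` as `t` served it. -/
def Unserved {N : ℕ} (δ : Fin N → ℕ) (s : ℕ → Fin N) (i : Fin N) (t : ℕ) : Prop :=
  ¬ ∃ t', (t / δ i) * δ i ≤ t' ∧ t' < t ∧ s t' = i

/-- Earliest-deadline-style property of MSMW: whenever some link is unserved in its
current frame, the slot serves an unserved link whose remaining time to its frame end,
`δ i - (t mod δ i)`, is minimal among unserved links. -/
def EDFPolicy {N : ℕ} (δ : Fin N → ℕ) (s : ℕ → Fin N) : Prop :=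
  ∀ t, (∃ i, Unserved δ s i t) →
    Unserved δ s (s t) t ∧
      ∀ j, Unserved δ s j t → δ (s t) - t % δ (s t) ≤ δ j - t % δ j

/-- Lemma 2: if `∑ 1/δ i ≤ 1`, then under the earliest-deadline-style policy every
link `i` is served at least once in each of its frames `[k·δ i, (k+1)·δ i)`. -/
theorem stmt_13 (N : ℕ) (hN : 0 < N) (δ : Fin N → ℕ) (hδ : ∀ i, 0 < δ i)
    (h : ∑ i, (1 : ℝ) / (δ i : ℝ) ≤ 1)
    (s : ℕ → Fin N) (hpol : EDFPolicy δ s) :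
    ∀ (i : Fin N) (k : ℕ), ∃ t, k * δ i ≤ t ∧ t < (k + 1) * δ i ∧ s t = i := by
  classical
  intro i k
  by_contra hmiss
  push_neg at hmiss
  -- hmiss : ∀ t, k * δ i ≤ t → t < (k+1) * δ i → s t ≠ i
  have hδi := hδ i
  set D := (k + 1) * δ i with hDdef
  have hkD : k * δ i < D := by
    have : (k + 1) * δ i = k * δ i + δ i := by ring
    omega
  -- the quotient inside a frame
  have hdiv : ∀ j : Fin N, ∀ m t : ℕ, m * δ j ≤ t → t < (m + 1) * δ j → t / δ j = m :=
    fun j m t h1 h2 => Nat.div_eq_of_lt_le h1 h2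
  -- deadline identity:  (t / δ j + 1) * δ j = t + (δ j - t % δ j)
  have hdl : ∀ (j : Fin N) (t : ℕ), (t / δ j + 1) * δ j = t + (δ j - t % δ j) := by
    intro j t
    have h1 : δ j * (t / δ j) + t % δ j = t := Nat.div_add_mod t (δ j)
    have h2 : t % δ j < δ j := Nat.mod_lt _ (hδ j)
    have h3 : (t / δ j + 1) * δ j = δ j * (t / δ j) + δ j := by ring
    omega
  have htlt : ∀ (j : Fin N) (t : ℕ), t < (t / δ j + 1) * δ j := by
    intro j t
    have h2 : t % δ j < δ j := Nat.mod_lt _ (hδ j)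
    have := hdl j t
    omega
  have htge : ∀ (j : Fin N) (t : ℕ), (t / δ j) * δ j ≤ t := fun j t => Nat.div_mul_le_self t (δ j)
  -- i is unserved throughout its k-th frame
  have hUi : ∀ t, k * δ i ≤ t → t < D → Unserved δ s i t := by
    intro t h1 h2 ⟨t', ht1, ht2, ht3⟩
    have hq : t / δ i = k := hdiv i k t h1 h2
    rw [hq] at ht1
    exact hmiss t' ht1 (lt_trans ht2 h2) ht3
  -- P t : slot t serves an unserved link with deadline ≤ D
  set P : ℕ → Prop := fun t =>
    Unserved δ s (s t) t ∧ (t / δ (s t) + 1) * δ (s t) ≤ D with hPdef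
  -- a slot serving an unserved link j always has deadline ≤ j's deadline
  have hserve : ∀ (t : ℕ) (j : Fin N), Unserved δ s j t →
      Unserved δ s (s t) t ∧ (t / δ (s t) + 1) * δ (s t) ≤ (t / δ j + 1) * δ j := by
    intro t j hj
    obtain ⟨h1, h2⟩ := hpol t ⟨j, hj⟩
    refine ⟨h1, ?_⟩
    have := h2 j hj
    rw [hdl (s t) t, hdl j t]
    omega
  -- Claim A : P holds on the k-th frame of i
  have hA : ∀ t, k * δ i ≤ t → t < D → P t := by
    intro t h1 h2
    obtain ⟨hu1, hu2⟩ := hserve t i (hUi t h1 h2)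
    refine ⟨hu1, ?_⟩
    rwa [hdiv i k t h1 h2] at hu2
  -- existence of a starting point for the busy interval
  have hQex : ∃ t, t ≤ k * δ i ∧ ∀ u, t ≤ u → u < D → P u :=
    ⟨k * δ i, le_refl _, hA⟩
  set t0 := Nat.find hQex with ht0def
  obtain ⟨ht0le, hQ⟩ := Nat.find_spec hQex
  rw [← ht0def] at ht0le hQ
  have ht0D : t0 < D := lt_of_le_of_lt ht0le hkD
  -- unservedness propagates backwards within a frame
  have hUback : ∀ (j : Fin N) (t u : ℕ), Unserved δ s j t →
      (t / δ j) * δ j ≤ u → u < t → Unserved δ s j u := by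
    intro j t u hj hu1 hu2 ⟨t', h1, h2, h3⟩
    have hq : u / δ j = t / δ j := hdiv j (t / δ j) u hu1 (lt_trans hu2 (htlt j t))
    rw [hq] at h1
    exact hj ⟨t', h1, lt_trans h2 hu2, h3⟩
  -- Claim C : every slot in [t0, D) serves a job whose frame starts at or after t0
  have hC : ∀ t, t0 ≤ t → t < D → t0 ≤ (t / δ (s t)) * δ (s t) := by
    intro t htt0 htD
    by_contra hf
    push_neg at hf
    have ht0pos : 0 < t0 := by omega
    have hlt : t0 - 1 < t0 := by omega
    refine Nat.find_min hQex hlt ⟨by omega, ?_⟩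
    intro u hu1 hu2
    rcases eq_or_lt_of_le hu1 with hu | hu
    · -- u = t0 - 1 : show P (t0 - 1)
      subst hu
      obtain ⟨hPt1, hPt2⟩ := hQ t htt0 htD
      set j := s t with hj
      have hfu : (t / δ j) * δ j ≤ t0 - 1 := by omega
      have hult : t0 - 1 < t := by omega
      have hUj : Unserved δ s j (t0 - 1) := hUback j t (t0 - 1) hPt1 hfu hult
      obtain ⟨hw1, hw2⟩ := hserve (t0 - 1) j hUj
      refine ⟨hw1, ?_⟩
      have hq : (t0 - 1) / δ j = t / δ j :=
        hdiv j (t / δ j) (t0 - 1) hfu (lt_trans hult (htlt j t))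
      rw [hq] at hw2
      omega
    · exact hQ u (by omega) hu2
  -- each slot in [t0, D) is served at most once per job; count jobs
  set a : Fin N → ℕ := fun j => (t0 + (δ j - 1)) / δ j with hadef
  have ha_iff : ∀ (j : Fin N) (m : ℕ), a j ≤ m ↔ t0 ≤ m * δ j := by
    intro j m
    constructor
    · intro hm
      have h1 : (t0 + (δ j - 1)) % δ j < δ j := Nat.mod_lt _ (hδ j)
      have h2 : δ j * ((t0 + (δ j - 1)) / δ j) + (t0 + (δ j - 1)) % δ j
          = t0 + (δ j - 1) := Nat.div_add_mod _ _
      have h3 : a j * δ j ≤ m * δ j := Nat.mul_le_mul_right _ hm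
      have hδj := hδ j
      have h4 : a j * δ j = δ j * ((t0 + (δ j - 1)) / δ j) := by
        rw [hadef]; ring
      omega
    · intro hm
      have hδj := hδ j
      have : t0 + (δ j - 1) < (m + 1) * δ j := by
        have : (m + 1) * δ j = m * δ j + δ j := by ring
        omega
      exact Nat.lt_succ_iff.mp (Nat.div_lt_iff_lt_mul (hδ j) |>.mpr this)
  have hb_iff : ∀ (j : Fin N) (m : ℕ), m < D / δ j ↔ (m + 1) * δ j ≤ D := by
    intro j m
    rw [← Nat.succ_le_iff, Nat.le_div_iff_mul_le (hδ j)]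
  set M : Fin N → Finset ℕ := fun j => Finset.Ico (a j) (D / δ j) with hMdef
  set J : Finset ((_ : Fin N) × ℕ) := Finset.univ.sigma M with hJdef
  have hmemJ : ∀ (j : Fin N) (m : ℕ),
      (⟨j, m⟩ : (_ : Fin N) × ℕ) ∈ J ↔ (t0 ≤ m * δ j ∧ (m + 1) * δ j ≤ D) := by
    intro j m
    rw [hJdef, Finset.mem_sigma, hMdef]
    simp only [Finset.mem_univ, true_and, Finset.mem_Ico]
    rw [ha_iff, hb_iff]
  have hikJ : (⟨i, k⟩ : (_ : Fin N) × ℕ) ∈ J := (hmemJ i k).mpr ⟨ht0le, le_refl _⟩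
  -- the injection from slots to jobs
  have hinj : (Finset.Ico t0 D).card ≤ (J.erase ⟨i, k⟩).card := by
    apply Finset.card_le_card_of_injOn (fun t => (⟨s t, t / δ (s t)⟩ : (_ : Fin N) × ℕ))
    · intro t ht
      rw [Finset.mem_coe, Finset.mem_Ico] at ht
      obtain ⟨ht1, ht2⟩ := ht
      obtain ⟨hPt1, hPt2⟩ := hQ t ht1 ht2
      rw [Finset.mem_coe, Finset.mem_erase]
      constructor
      · intro heq
        have h1 : s t = i := congrArg Sigma.fst heq
        have h2 : t / δ (s t) = k := by
          have := (Sigma.mk.inj_iff.mp heq).2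
          exact eq_of_heq this
        rw [h1] at h2
        have hge : k * δ i ≤ t := by
          have := htge i t
          rw [h2] at this
          exact this
        exact hmiss t hge ht2 h1
      · exact (hmemJ (s t) (t / δ (s t))).mpr ⟨hC t ht1 ht2, hPt2⟩
    · intro t1 h1 t2 h2 heq
      rw [Finset.mem_coe, Finset.mem_Ico] at h1 h2
      by_contra hne
      rcases Nat.lt_or_ge t1 t2 with hlt | hge
      · have hj : s t1 = s t2 := congrArg Sigma.fst heq
        have hm : t1 / δ (s t1) = t2 / δ (s t2) := eq_of_heq (Sigma.mk.inj_iff.mp heq).2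
        obtain ⟨hPt1, _⟩ := hQ t2 h2.1 h2.2
        apply hPt1
        refine ⟨t1, ?_, hlt, hj⟩
        rw [hj] at hm
        rw [← hm, ← hj]
        exact htge (s t1) t1
      · rcases Nat.lt_or_ge t2 t1 with hlt | hge2
        · have hj : s t2 = s t1 := (congrArg Sigma.fst heq).symm
          have hm : t2 / δ (s t2) = t1 / δ (s t1) := (eq_of_heq (Sigma.mk.inj_iff.mp heq).2).symm
          obtain ⟨hPt1, _⟩ := hQ t1 h1.1 h1.2
          apply hPt1
          refine ⟨t2, ?_, hlt, hj⟩
          rw [hj] at hm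
          rw [← hm, ← hj]
          exact htge (s t2) t2
        · omega
  -- counting: card of J is at most D - t0 (in ℝ)
  have hcardM : ∀ j : Fin N, ((M j).card : ℝ) ≤ ((D : ℝ) - t0) * (1 / δ j) := by
    intro j
    have hδj := hδ j
    have hδjR : (0 : ℝ) < (δ j : ℝ) := by exact_mod_cast hδj
    rw [hMdef]
    simp only [Nat.card_Ico]
    rcases le_or_gt (a j) (D / δ j) with hle | hlt
    · rw [Nat.cast_sub hle]
      have hub : ((D / δ j : ℕ) : ℝ) ≤ (D : ℝ) / δ j := Nat.cast_div_le
      have hlb : (t0 : ℝ) / δ j ≤ (a j : ℝ) := by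
        rw [div_le_iff₀ hδjR]
        have := (ha_iff j (a j)).mp (le_refl _)
        exact_mod_cast this
      have : ((D / δ j : ℕ) : ℝ) - (a j : ℝ) ≤ (D : ℝ) / δ j - (t0 : ℝ) / δ j := by
        linarith
      calc ((D / δ j : ℕ) : ℝ) - (a j : ℝ) ≤ (D : ℝ) / δ j - (t0 : ℝ) / δ j := this
        _ = ((D : ℝ) - t0) * (1 / δ j) := by field_simp
    · have : D / δ j - a j = 0 := by omega
      rw [this]
      have h1 : (t0 : ℝ) ≤ (D : ℝ) := by exact_mod_cast le_of_lt ht0D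
      have : (0 : ℝ) ≤ ((D : ℝ) - t0) * (1 / δ j) := mul_nonneg (by linarith) (by positivity)
      simpa using this
  have hJcard : (J.card : ℝ) ≤ (D : ℝ) - t0 := by
    rw [hJdef, Finset.card_sigma]
    push_cast
    calc (∑ j, ((M j).card : ℝ)) ≤ ∑ j, ((D : ℝ) - t0) * (1 / δ j) :=
          Finset.sum_le_sum fun j _ => hcardM j
      _ = ((D : ℝ) - t0) * ∑ j, (1 / (δ j : ℝ)) := by rw [Finset.mul_sum]
      _ ≤ ((D : ℝ) - t0) * 1 := by
          apply mul_le_mul_of_nonneg_left h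
          have : (t0 : ℝ) ≤ (D : ℝ) := by exact_mod_cast le_of_lt ht0D
          linarith
      _ = (D : ℝ) - t0 := by ring
  -- final contradiction
  have hIco : (Finset.Ico t0 D).card = D - t0 := Nat.card_Ico _ _
  have herase : (J.erase ⟨i, k⟩).card = J.card - 1 := Finset.card_erase_of_mem hikJ
  have hJpos : 1 ≤ J.card := Finset.card_pos.mpr ⟨_, hikJ⟩ |>.le.trans (le_refl _) |> fun _ => Finset.card_pos.mpr ⟨_, hikJ⟩
  have hfin : D - t0 + 1 ≤ J.card := by omega
  have hfinR : ((D - t0 : ℕ) : ℝ) + 1 ≤ (J.card : ℝ) := by exact_mod_cast hfin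
  rw [Nat.cast_sub (le_of_lt ht0D)] at hfinR
  linarith
end
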